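/- Let α > 0 and Δ_IN > 0 be real numbers. Define E(λ₀) = (1/2)·[ (λ₀(α + Δ_IN) + α(α + Δ_IN - 2) + Δ_IN + λ₀ + 1) / √((α + λ₀ - 1)² + 4λ₀) − α + Δ_IN + 1 ] for λ₀ > 0. Then: (i) E(Δ_IN) = (1/2)·(√((α + Δ_IN + 1)² − 4α) − α + Δ_IN + 1), which is the Bayes-optimal generalisation error at zero outlier fraction; and (ii) λ₀ = Δ_IN is a critical point of E, i.e. the derivative of E with respect to λ₀ vanishes at λ₀ = Δ_IN. -/

import Mathlib

/-- The high-dimensional-limit generalisation error of ridge regression with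
regularisation λ₀ at zero outlier fraction. -/
noncomputable def ridgeGenError (α ΔIN lam0 : ℝ) : ℝ :=
  (1 / 2) * ((lam0 * (α + ΔIN) + α * (α + ΔIN - 2) + ΔIN + lam0 + 1) /
      Real.sqrt ((α + lam0 - 1) ^ 2 + 4 * lam0) - α + ΔIN + 1)

/-- At zero outlier fraction, the ridge generalisation error evaluated at
λ₀ = Δ_IN equals the Bayes-optimal generalisation error, and λ₀ = Δ_IN is a
critical point of the ridge generalisation error. -/
theorem ridge_optimal_regularisation_zeroth_order
    (α ΔIN : ℝ) (hα : 0 < α) (hIN : 0 < ΔIN) :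
    ridgeGenError α ΔIN ΔIN
      = (1 / 2) * (Real.sqrt ((α + ΔIN + 1) ^ 2 - 4 * α) - α + ΔIN + 1) ∧
    HasDerivAt (fun lam0 : ℝ => ridgeGenError α ΔIN lam0) 0 ΔIN := by
  set s : ℝ := (α + ΔIN - 1) ^ 2 + 4 * ΔIN with hs_def
  have hs_pos : 0 < s := by positivity
  have hs_ne : s ≠ 0 := ne_of_gt hs_pos
  set t : ℝ := Real.sqrt s with ht_def
  have ht_pos : 0 < t := Real.sqrt_pos.mpr hs_pos
  have ht_ne : t ≠ 0 := ne_of_gt ht_pos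
  have ht_sq : t ^ 2 = s := Real.sq_sqrt hs_pos.le
  have hkey : ΔIN * (α + ΔIN) + α * (α + ΔIN - 2) + ΔIN + ΔIN + 1 = s := by
    rw [hs_def]; ring
  constructor
  · unfold ridgeGenError
    rw [hkey]
    have : s / t = t := by
      rw [ht_def]; exact Real.div_sqrt
    rw [← hs_def, this]
    congr 2
    rw [ht_def, hs_def]
    congr 1
    ring
  · -- derivative of inner polynomial s(λ)
    have h1 : HasDerivAt (fun l : ℝ => α + l - 1) 1 ΔIN := by
      simpa using ((hasDerivAt_id ΔIN).const_add α).sub_const 1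
    have h2 : HasDerivAt (fun l : ℝ => (α + l - 1) ^ 2) (2 * (α + ΔIN - 1)) ΔIN := by
      simpa [mul_comm] using h1.fun_pow 2
    have h3 : HasDerivAt (fun l : ℝ => 4 * l) 4 ΔIN := by
      simpa using (hasDerivAt_id ΔIN).const_mul 4
    have hs : HasDerivAt (fun l : ℝ => (α + l - 1) ^ 2 + 4 * l)
        (2 * (α + ΔIN - 1) + 4) ΔIN := h2.add h3
    have hsqrt : HasDerivAt (fun l : ℝ => Real.sqrt ((α + l - 1) ^ 2 + 4 * l))
        ((2 * (α + ΔIN - 1) + 4) / (2 * t)) ΔIN := by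
      have := (Real.hasDerivAt_sqrt hs_ne).comp ΔIN hs
      simpa [ht_def, div_eq_inv_mul, mul_comm, Function.comp_def] using this
    have hN : HasDerivAt
        (fun l : ℝ => l * (α + ΔIN) + α * (α + ΔIN - 2) + ΔIN + l + 1)
        (α + ΔIN + 1) ΔIN := by
      have : HasDerivAt (fun l : ℝ => l * (α + ΔIN)) (α + ΔIN) ΔIN := by
        simpa using (hasDerivAt_id ΔIN).mul_const (α + ΔIN)
      simpa using ((((this.add_const (α * (α + ΔIN - 2))).add_const ΔIN).add
        (hasDerivAt_id ΔIN)).add_const 1)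
    have hdiv := hN.div hsqrt ht_ne
    have hval :
        ((α + ΔIN + 1) * t -
          (ΔIN * (α + ΔIN) + α * (α + ΔIN - 2) + ΔIN + ΔIN + 1) *
            ((2 * (α + ΔIN - 1) + 4) / (2 * t))) / t ^ 2 = 0 := by
      rw [hkey, ← ht_sq]
      field_simp
      ring_nf
    rw [hval] at hdiv
    have hfinal := ((hdiv.sub_const α).add_const ΔIN).add_const 1
    have := hfinal.const_mul (1 / 2 : ℝ)
    simpa [ridgeGenError, sub_add_eq_sub_sub] using this
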